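/- Let a > b > 0, V > 0, k > 0, and let x, y : ℝ → ℝ be differentiable functions such that (x(t), y(t)) ≠ (0, 0) for all t ≥ 0 and such that ẋ(t) = V·cos(ψ_D(x(t), y(t))) and ẏ(t) = V·sin(ψ_D(x(t), y(t))) for all t ≥ 0. If the initial position lies on the desired ellipse, x(0)²/a² + y(0)²/b² = 1, then x(t)²/a² + y(t)²/b² = 1 for all t ≥ 0; that is, the desired ellipse is a positively invariant set of the closed-loop dynamics. -/

import Mathlib

open Real

/-- The counter-clockwise tangential heading at `(x, y)`:
`atan2 (b² x, −a² y)`, i.e. the argument of the complex number `−a² y + i b² x`. -/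
noncomputable def psiT (a b x y : ℝ) : ℝ :=
  Complex.arg ⟨-(a ^ 2) * y, b ^ 2 * x⟩

/-- The offset angle `ψ_O = arctan (k (γ − 1))` with `γ = x²/a² + y²/b²`. -/
noncomputable def psiO (a b k x y : ℝ) : ℝ :=
  Real.arctan (k * (x ^ 2 / a ^ 2 + y ^ 2 / b ^ 2 - 1))

/-- The desired heading `ψ_D = ψ_T + ψ_O`. -/
noncomputable def psiD (a b k x y : ℝ) : ℝ :=
  psiT a b x y + psiO a b k x y

lemma key_alg (a b V k X Y r : ℝ) (hr : r ≠ 0) (ha : a ≠ 0) (hb : b ≠ 0)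
    (hc : Real.cos (psiT a b X Y) = (-(a ^ 2) * Y) / r)
    (hs : Real.sin (psiT a b X Y) = (b ^ 2 * X) / r) :
    2 * X * (V * Real.cos (psiD a b k X Y)) / a ^ 2
      + 2 * Y * (V * Real.sin (psiD a b k X Y)) / b ^ 2
      = -(2 * V * (b ^ 2 * X ^ 2 / a ^ 2 + a ^ 2 * Y ^ 2 / b ^ 2) / r)
          * Real.sin (psiO a b k X Y) := by
  unfold psiD
  rw [Real.cos_add, Real.sin_add, hc, hs]
  field_simp
  ring

lemma abs_sin_arctan_le (u : ℝ) : |Real.sin (Real.arctan u)| ≤ |u| := by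
  rw [Real.sin_arctan, abs_div]
  have h1 : (1 : ℝ) ≤ Real.sqrt (1 + u ^ 2) := by
    have := Real.sqrt_le_sqrt (show (1 : ℝ) ≤ 1 + u ^ 2 by nlinarith)
    simpa using this
  rw [abs_of_nonneg (Real.sqrt_nonneg _)]
  exact div_le_self (abs_nonneg u) h1

theorem ellipse_positively_invariant
    (a b V k : ℝ) (hab : b < a) (hb : 0 < b) (hV : 0 < V) (hk : 0 < k)
    (x y : ℝ → ℝ) (hx : Differentiable ℝ x) (hy : Differentiable ℝ y)
    (hne : ∀ t : ℝ, 0 ≤ t → (x t, y t) ≠ (0, 0))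
    (hxd : ∀ t : ℝ, 0 ≤ t → deriv x t = V * Real.cos (psiD a b k (x t) (y t)))
    (hyd : ∀ t : ℝ, 0 ≤ t → deriv y t = V * Real.sin (psiD a b k (x t) (y t)))
    (h0 : x 0 ^ 2 / a ^ 2 + y 0 ^ 2 / b ^ 2 = 1) :
    ∀ t : ℝ, 0 ≤ t → x t ^ 2 / a ^ 2 + y t ^ 2 / b ^ 2 = 1 := by
  intro T hT
  have ha0 : (0 : ℝ) < a := hb.trans hab
  have ha2 : (a : ℝ) ^ 2 ≠ 0 := by positivity
  have hb2 : (b : ℝ) ^ 2 ≠ 0 := by positivity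
  set g : ℝ → ℝ := fun t => x t ^ 2 / a ^ 2 + y t ^ 2 / b ^ 2 - 1 with hgdef
  set R : ℝ → ℝ := fun t => Real.sqrt ((a ^ 2 * y t) ^ 2 + (b ^ 2 * x t) ^ 2) with hRdef
  set Q : ℝ → ℝ := fun t => b ^ 2 * x t ^ 2 / a ^ 2 + a ^ 2 * y t ^ 2 / b ^ 2 with hQdef
  -- R equals the complex absolute value
  have hRabs : ∀ t : ℝ,
      ‖(⟨-(a ^ 2) * y t, b ^ 2 * x t⟩ : ℂ)‖ = R t := by
    intro t
    rw [Complex.norm_def, Complex.normSq_mk, hRdef]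
    congr 1
    ring
  -- R is positive for t ≥ 0
  have hRpos : ∀ t : ℝ, 0 ≤ t → 0 < R t := by
    intro t ht
    have h := hne t ht
    have hxy : x t ≠ 0 ∨ y t ≠ 0 := by
      by_contra hcon
      push_neg at hcon
      exact h (by simp [hcon.1, hcon.2])
    apply Real.sqrt_pos.mpr
    rcases hxy with h1 | h1
    · have : 0 < (b ^ 2 * x t) ^ 2 := by positivity
      nlinarith [sq_nonneg (a ^ 2 * y t)]
    · have : 0 < (a ^ 2 * y t) ^ 2 := by positivity
      nlinarith [sq_nonneg (b ^ 2 * x t)]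
  -- the complex number is nonzero for t ≥ 0
  have hzne : ∀ t : ℝ, 0 ≤ t →
      (⟨-(a ^ 2) * y t, b ^ 2 * x t⟩ : ℂ) ≠ 0 := by
    intro t ht hz
    have := hRpos t ht
    rw [← hRabs t, hz] at this
    simp at this
  -- cos and sin of psiT
  have hcosT : ∀ t : ℝ, 0 ≤ t →
      Real.cos (psiT a b (x t) (y t)) = (-(a ^ 2) * y t) / R t := by
    intro t ht
    rw [psiT, Complex.cos_arg (hzne t ht), hRabs t]
  have hsinT : ∀ t : ℝ, 0 ≤ t →
      Real.sin (psiT a b (x t) (y t)) = (b ^ 2 * x t) / R t := by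
    intro t ht
    rw [psiT, Complex.sin_arg, hRabs t]
  -- derivative of g
  have hgd : ∀ t : ℝ, HasDerivAt g
      (2 * x t * deriv x t / a ^ 2 + 2 * y t * deriv y t / b ^ 2) t := by
    intro t
    have h1 : HasDerivAt (fun s => x s ^ 2 / a ^ 2)
        ((2 : ℕ) * x t ^ 1 * deriv x t / a ^ 2) t :=
      (((hx t).hasDerivAt.pow 2)).div_const _
    have h2 : HasDerivAt (fun s => y s ^ 2 / b ^ 2)
        ((2 : ℕ) * y t ^ 1 * deriv y t / b ^ 2) t :=
      (((hy t).hasDerivAt.pow 2)).div_const _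
    have := (h1.add h2).sub_const 1
    refine this.congr_deriv ?_
    push_cast
    ring
  -- derivative formula for t ≥ 0
  have hD : ∀ t : ℝ, 0 ≤ t →
      2 * x t * deriv x t / a ^ 2 + 2 * y t * deriv y t / b ^ 2
        = -(2 * V * Q t / R t) * Real.sin (psiO a b k (x t) (y t)) := by
    intro t ht
    rw [hxd t ht, hyd t ht]
    exact key_alg a b V k (x t) (y t) (R t) (hRpos t ht).ne' ha0.ne' hb.ne'
      (hcosT t ht) (hsinT t ht)
  -- continuity of Q/R on [0, T]
  have hQcont : Continuous Q := by
    apply Continuous.add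
    · exact (continuous_const.mul ((hx.continuous.pow 2))).div_const _
    · exact (continuous_const.mul ((hy.continuous.pow 2))).div_const _
  have hRcont : Continuous R := by
    apply Real.continuous_sqrt.comp
    exact ((continuous_const.mul hy.continuous).pow 2).add
      ((continuous_const.mul hx.continuous).pow 2)
  obtain ⟨M, hM⟩ := (isCompact_Icc (a := (0:ℝ)) (b := T)).exists_bound_of_continuousOn
    ((hQcont.continuousOn.div hRcont.continuousOn
      (fun t ht => (hRpos t ht.1).ne')) : ContinuousOn (fun t => Q t / R t) _)
  -- apply Gronwall with K = 2 V k M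
  have hgron := norm_le_gronwallBound_of_norm_deriv_right_le
    (f := g) (f' := fun s => 2 * x s * deriv x s / a ^ 2 + 2 * y s * deriv y s / b ^ 2)
    (δ := 0) (K := 2 * V * k * M) (ε := 0) (a := 0) (b := T)
    (((hx.continuous.pow 2).div_const _ |>.add
      ((hy.continuous.pow 2).div_const _) |>.sub continuous_const).continuousOn)
    (fun s _ => (hgd s).hasDerivWithinAt)
    (by simp [hgdef, h0])
    ?_
  · have := hgron T ⟨hT, le_rfl⟩
    rw [sub_zero, gronwallBound_ε0, zero_mul] at this
    have hgT : g T = 0 := by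
      have h' : |g T| ≤ 0 := by simpa [Real.norm_eq_abs] using this
      exact abs_eq_zero.mp (le_antisymm h' (abs_nonneg _))
    simp only [hgdef] at hgT
    linarith
  · intro s hs
    have hs0 : 0 ≤ s := hs.1
    simp only [Pi.div_apply] at hM
    show ‖2 * x s * deriv x s / a ^ 2 + 2 * y s * deriv y s / b ^ 2‖ ≤ _
    rw [hD s hs0]
    have hQ0 : 0 ≤ Q s := by positivity
    have hQR : 0 ≤ Q s / R s := div_nonneg hQ0 (hRpos s hs0).le
    have hQRM : Q s / R s ≤ M := by
      have := hM s ⟨hs0, hs.2.le⟩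
      rwa [Real.norm_eq_abs, abs_of_nonneg hQR] at this
    have hsin : |Real.sin (psiO a b k (x s) (y s))| ≤ k * |g s| := by
      rw [psiO]
      calc |Real.sin (Real.arctan (k * (x s ^ 2 / a ^ 2 + y s ^ 2 / b ^ 2 - 1)))|
          ≤ |k * (x s ^ 2 / a ^ 2 + y s ^ 2 / b ^ 2 - 1)| := abs_sin_arctan_le _
        _ = k * |g s| := by rw [abs_mul, abs_of_pos hk]
    have hnn : 0 ≤ 2 * V * Q s / R s := div_nonneg (by positivity) (hRpos s hs0).le
    rw [Real.norm_eq_abs, Real.norm_eq_abs, abs_mul, abs_neg, abs_of_nonneg hnn]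
    have hkey := mul_le_mul_of_nonneg_left
      (mul_le_mul hQRM hsin (abs_nonneg _) (hQR.trans hQRM))
      (by positivity : (0:ℝ) ≤ 2 * V)
    have heq : 2 * V * Q s / R s * |Real.sin (psiO a b k (x s) (y s))|
        = 2 * V * (Q s / R s * |Real.sin (psiO a b k (x s) (y s))|) := by ring
    rw [heq]
    linarith [hkey]
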